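/- arXiv:cond-mat/0307308 — 4 statements merged into one kernel-verified Lean document; each statement's English description precedes it below -/
import Mathlib

section
/- For all real numbers α > 0, n > 0, m > 0, x > 0 and 0 < u < 1, the following integral identity holds: (1/(Γ(n)Γ(m))) · ∫_{x/u}^∞ (y^{−α})^{n−1} · (x^{−α} − y^{−α})^{m−1} · α y^{−(1+α)} dy = (x^{−α})^{n+m−1} · B_{n,m}(u^α) / Γ(n+m). -/
open Real MeasureTheory

/-- The cumulative distribution function of the Beta(n,m) distribution. -/
noncomputable def betaCDF (n m v : ℝ) : ℝ :=
  ∫ s in (0:ℝ)..v, (Real.Gamma (n + m) / (Real.Gamma n * Real.Gamma m)) *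
    s ^ (n - 1) * (1 - s) ^ (m - 1)

/-- Lemma 6a: the key integral identity for the hierarchy of extreme flights of the
selfsimilar one-sided Lévy process with flight tail `Λ(x) = x^(-α)`. -/
theorem extreme_flight_integral_identity (α n m x u : ℝ)
    (hα : 0 < α) (hn : 0 < n) (hm : 0 < m) (hx : 0 < x) (hu0 : 0 < u) (hu1 : u < 1) :
    (1 / (Real.Gamma n * Real.Gamma m)) *
      (∫ y in Set.Ioi (x / u),
        (y ^ (-α)) ^ (n - 1) * (x ^ (-α) - y ^ (-α)) ^ (m - 1) * (α * y ^ (-(1 + α))))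
    = (x ^ (-α)) ^ (n + m - 1) * betaCDF n m (u ^ α) / Real.Gamma (n + m) := by
  have hα' : α ≠ 0 := hα.ne'
  set T : ℝ := u ^ α with hT
  have hT0 : 0 < T := rpow_pos_of_pos hu0 α
  have hT1 : T < 1 := by
    have := rpow_lt_one hu0.le hu1 hα
    simpa [hT] using this
  set g : ℝ → ℝ := fun s => x * s ^ (-α⁻¹) with hg
  set g' : ℝ → ℝ := fun s => x * (-α⁻¹ * s ^ (-α⁻¹ - 1)) with hg'
  -- image of the substitution
  have himg : g '' Set.Ioo 0 T = Set.Ioi (x / u) := by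
    ext y
    constructor
    · rintro ⟨s, ⟨hs0, hsT⟩, rfl⟩
      have h1 : T ^ (-α⁻¹) < s ^ (-α⁻¹) :=
        rpow_lt_rpow_of_neg hs0 hsT (neg_lt_zero.mpr (by positivity))
      have h2 : T ^ (-α⁻¹) = u⁻¹ := by
        rw [hT, ← rpow_mul hu0.le, mul_neg, mul_inv_cancel₀ hα', rpow_neg_one]
      have : x / u < x * s ^ (-α⁻¹) := by
        rw [div_eq_mul_inv, ← h2]
        exact mul_lt_mul_of_pos_left h1 hx
      simpa [hg] using this
    · intro hy
      have hy0 : 0 < y := lt_trans (by positivity) hy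
      refine ⟨(x / y) ^ α, ⟨by positivity, ?_⟩, ?_⟩
      · have hxy : x / y < u := by
          rw [div_lt_iff₀ hy0]
          calc x = (x / u) * u := by field_simp
          _ < y * u := by exact mul_lt_mul_of_pos_right hy hu0
          _ = u * y := mul_comm _ _
        exact rpow_lt_rpow (by positivity) hxy hα
      · show x * ((x / y) ^ α) ^ (-α⁻¹) = y
        rw [← rpow_mul (by positivity), mul_neg, mul_inv_cancel₀ hα', rpow_neg_one]
        field_simp
  have hinj : Set.InjOn g (Set.Ioo 0 T) := by
    intro s₁ h₁ s₂ h₂ he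
    have : s₁ ^ (-α⁻¹) = s₂ ^ (-α⁻¹) := by
      have := he
      simp only [hg] at this
      exact mul_left_cancel₀ hx.ne' this
    have := Real.rpow_left_injOn (x := -α⁻¹) (by simp [hα']) h₁.1.le h₂.1.le this
    exact this
  have hderiv : ∀ s ∈ Set.Ioo (0:ℝ) T, HasDerivWithinAt g (g' s) (Set.Ioo 0 T) s := by
    intro s hs
    exact ((Real.hasDerivAt_rpow_const (Or.inl hs.1.ne')).const_mul x).hasDerivWithinAt
  -- change of variables
  have hcv := integral_image_eq_integral_abs_deriv_smul measurableSet_Ioo hderiv hinj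
    (fun y => (y ^ (-α)) ^ (n - 1) * (x ^ (-α) - y ^ (-α)) ^ (m - 1) * (α * y ^ (-(1 + α))))
  rw [himg] at hcv
  -- pointwise computation of the transformed integrand
  have hpt : ∀ s ∈ Set.Ioo (0:ℝ) T,
      |g' s| • ((g s ^ (-α)) ^ (n - 1) * (x ^ (-α) - g s ^ (-α)) ^ (m - 1) *
        (α * g s ^ (-(1 + α))))
      = (x ^ (-α)) ^ (n + m - 1) * (s ^ (n - 1) * (1 - s) ^ (m - 1)) := by
    intro s hs
    obtain ⟨hs0, hsT⟩ := hs
    have hs1 : s < 1 := hsT.trans hT1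
    have hgs : g s = x * s ^ (-α⁻¹) := rfl
    have hgpos : 0 < g s := by rw [hgs]; positivity
    have hkey : g s ^ (-α) = x ^ (-α) * s := by
      rw [hgs, mul_rpow hx.le (by positivity), ← rpow_mul hs0.le,
        show -α⁻¹ * -α = 1 by field_simp, rpow_one]
    have hkey2 : g s ^ (-(1 + α)) = x ^ (-(1 + α)) * s ^ ((1 + α) * α⁻¹) := by
      rw [hgs, mul_rpow hx.le (by positivity), ← rpow_mul hs0.le]
      congr 1
      ring
    have habs : |g' s| = x * α⁻¹ * s ^ (-α⁻¹ - 1) := by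
      have : g' s = -(x * α⁻¹ * s ^ (-α⁻¹ - 1)) := by rw [hg']; ring
      rw [this, abs_neg, abs_of_pos (by positivity)]
    rw [smul_eq_mul, habs, hkey, hkey2]
    have hsub : x ^ (-α) - x ^ (-α) * s = x ^ (-α) * (1 - s) := by ring
    rw [hsub, mul_rpow (by positivity) hs0.le, mul_rpow (by positivity) (by linarith)]
    -- now collect powers of x and of s
    have hxs : ∀ a b : ℝ, x ^ a * x ^ b = x ^ (a + b) := fun a b => (rpow_add hx a b).symm
    have hss : ∀ a b : ℝ, s ^ a * s ^ b = s ^ (a + b) := fun a b => (rpow_add hs0 a b).symm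
    have e1 : (x ^ (-α)) ^ (n - 1) = x ^ (-α * (n - 1)) := by rw [← rpow_mul hx.le]
    have e2 : (x ^ (-α)) ^ (m - 1) = x ^ (-α * (m - 1)) := by rw [← rpow_mul hx.le]
    have e3 : (x ^ (-α)) ^ (n + m - 1) = x ^ (-α * (n + m - 1)) := by rw [← rpow_mul hx.le]
    rw [e1, e2, e3]
    have hx1 : x = x ^ (1:ℝ) := (rpow_one x).symm
    have hsexp : s ^ (-α⁻¹ - 1) * s ^ ((1 + α) * α⁻¹) = 1 := by
      rw [hss, ← rpow_zero s]
      congr 1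
      field_simp
      simp only [rpow_zero]; ring
    have hxexp : x ^ (1:ℝ) * (x ^ (-α * (n - 1)) * (x ^ (-α * (m - 1)) * x ^ (-(1 + α))))
        = x ^ (-α * (n + m - 1)) := by
      rw [hxs, hxs, hxs]; congr 1; ring
    calc x * α⁻¹ * s ^ (-α⁻¹ - 1) *
          (x ^ (-α * (n - 1)) * s ^ (n - 1) * (x ^ (-α * (m - 1)) * (1 - s) ^ (m - 1)) *
            (α * (x ^ (-(1 + α)) * s ^ ((1 + α) * α⁻¹))))
        = (α⁻¹ * α) * (s ^ (-α⁻¹ - 1) * s ^ ((1 + α) * α⁻¹)) *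
          (x ^ (1:ℝ) * (x ^ (-α * (n - 1)) * (x ^ (-α * (m - 1)) * x ^ (-(1 + α))))) *
          (s ^ (n - 1) * (1 - s) ^ (m - 1)) := by rw [← hx1]; ring
      _ = x ^ (-α * (n + m - 1)) * (s ^ (n - 1) * (1 - s) ^ (m - 1)) := by
          rw [hsexp, hxexp, inv_mul_cancel₀ hα']; ring
  rw [setIntegral_congr_fun measurableSet_Ioo hpt] at hcv
  rw [hcv, integral_const_mul]
  -- convert set integral over Ioo into an interval integral, unfold betaCDF
  have hIoo : ∫ s in Set.Ioo (0:ℝ) T, s ^ (n - 1) * (1 - s) ^ (m - 1)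
      = ∫ s in (0:ℝ)..T, s ^ (n - 1) * (1 - s) ^ (m - 1) := by
    rw [intervalIntegral.integral_of_le hT0.le, ← integral_Ioc_eq_integral_Ioo]
  rw [hIoo]
  have hbeta : betaCDF n m T = (Real.Gamma (n + m) / (Real.Gamma n * Real.Gamma m)) *
      ∫ s in (0:ℝ)..T, s ^ (n - 1) * (1 - s) ^ (m - 1) := by
    rw [betaCDF, ← intervalIntegral.integral_const_mul]
    simp only [mul_assoc]
  rw [hbeta]
  have hGn : Real.Gamma n ≠ 0 := (Real.Gamma_pos_of_pos hn).ne'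
  have hGm : Real.Gamma m ≠ 0 := (Real.Gamma_pos_of_pos hm).ne'
  have hGnm : Real.Gamma (n + m) ≠ 0 := (Real.Gamma_pos_of_pos (by linarith)).ne'
  field_simp
end

section
/- Fix a real number α > 0, a real t > 0 and an integer K ≥ 1. Then for all u_1, …, u_K ∈ (0,1]: ∫_{{x ∈ ℝ^{K+1} : x_1 > ⋯ > x_{K+1} > 0 and x_{k+1} ≤ u_k x_k for k = 1,…,K}} t^{K+1} · exp(−t·x_{K+1}^{−α}) · ∏_{k=1}^{K+1} α x_k^{−(1+α)} dx = ∏_{k=1}^K u_k^{α k}. -/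
open Real MeasureTheory Set Filter Topology
open scoped ENNReal

noncomputable def phiA (α t : ℝ) (y : ℝ) : ℝ := if y ≤ 0 then 0 else Real.exp (-t * y ^ (-α))

noncomputable def densA (α t : ℝ) (y : ℝ) : ℝ :=
  Real.exp (-t * y ^ (-α)) * (t * (α * y ^ (-(1 + α))))

def boxA (K : ℕ) (u : Fin K → ℝ) : Set (Fin (K + 1) → ℝ) :=
  {x | (StrictAnti x ∧ 0 < x (Fin.last K)) ∧ ∀ k : Fin K, x k.succ ≤ u k * x k.castSucc}

noncomputable def FA (α t : ℝ) (K : ℕ) (x : Fin (K + 1) → ℝ) : ℝ :=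
  t ^ (K + 1) * Real.exp (-t * (x (Fin.last K)) ^ (-α)) * ∏ i : Fin (K + 1), α * (x i) ^ (-(1 + α))




lemma densA_nonneg {α t : ℝ} (hα : 0 < α) (ht : 0 < t) {y : ℝ} (hy : 0 ≤ y) :
    0 ≤ densA α t y := by
  unfold densA; positivity

lemma phiA_hasDerivAt {α t : ℝ} {y : ℝ} (hy : 0 < y) :
    HasDerivAt (phiA α t) (densA α t y) y := by
  have h1 : HasDerivAt (fun x : ℝ => x ^ (-α)) (-α * y ^ (-α - 1)) y :=
    Real.hasDerivAt_rpow_const (Or.inl hy.ne')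
  have h2 := (h1.const_mul (-t)).exp
  have heq : phiA α t =ᶠ[𝓝 y] fun x : ℝ => Real.exp (-t * x ^ (-α)) := by
    filter_upwards [Ioi_mem_nhds hy] with x hx
    simp [phiA, not_le.mpr (mem_Ioi.mp hx)]
  have h3 := h2.congr_of_eventuallyEq heq
  refine h3.congr_deriv ?_
  have he : -(1 + α) = -α - 1 := by ring
  rw [densA, he]; ring



lemma phiA_tendsto_zero {α t : ℝ} (hα : 0 < α) (ht : 0 < t) :
    Tendsto (phiA α t) (𝓝[>] (0:ℝ)) (𝓝 0) := by
  have hb : Tendsto (fun x : ℝ => x ^ α) (𝓝[>] (0:ℝ)) (𝓝[>] (0:ℝ)) := by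
    apply tendsto_nhdsWithin_of_tendsto_nhds_of_eventually_within
    · have := (Real.continuousAt_rpow_const 0 α (Or.inr hα.le)).tendsto
      simpa [Real.zero_rpow hα.ne'] using this.mono_left nhdsWithin_le_nhds
    · filter_upwards [self_mem_nhdsWithin] with x hx
      exact Real.rpow_pos_of_pos hx α
  have hinv : Tendsto (fun x : ℝ => (x ^ α)⁻¹) (𝓝[>] (0:ℝ)) atTop :=
    tendsto_inv_nhdsGT_zero.comp hb
  have h1 : Tendsto (fun x : ℝ => x ^ (-α)) (𝓝[>] (0:ℝ)) atTop := by
    refine hinv.congr' ?_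
    filter_upwards [self_mem_nhdsWithin] with x hx
    rw [Real.rpow_neg (le_of_lt hx)]
  have h2 : Tendsto (fun x : ℝ => -t * x ^ (-α)) (𝓝[>] (0:ℝ)) atBot :=
    h1.const_mul_atTop_of_neg (by linarith)
  have h3 := Real.tendsto_exp_atBot.comp h2
  refine h3.congr' ?_
  filter_upwards [self_mem_nhdsWithin] with x hx
  simp [phiA, not_le.mpr (mem_Ioi.mp hx)]

lemma phiA_contWithinAt {α t : ℝ} (hα : 0 < α) (ht : 0 < t) :
    ContinuousWithinAt (phiA α t) (Ici (0:ℝ)) 0 := by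
  have h0 : phiA α t 0 = 0 := by simp [phiA]
  unfold ContinuousWithinAt
  rw [h0, ← Set.Ioi_insert, nhdsWithin_insert, tendsto_sup]
  exact ⟨by rw [tendsto_pure_left]; intro s hs; simpa [h0] using mem_of_mem_nhds hs,
    phiA_tendsto_zero hα ht⟩

lemma phiA_contOn {α t : ℝ} (hα : 0 < α) (ht : 0 < t) (c : ℝ) :
    ContinuousOn (phiA α t) (Icc (0:ℝ) c) := by
  intro x hx
  rcases eq_or_lt_of_le hx.1 with h | h
  · subst h
    exact (phiA_contWithinAt hα ht).mono Icc_subset_Ici_self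
  · exact (phiA_hasDerivAt h).continuousAt.continuousWithinAt

lemma phiA_tendsto_one {α t : ℝ} (hα : 0 < α) (ht : 0 < t) :
    Tendsto (phiA α t) atTop (𝓝 1) := by
  have h1 := tendsto_rpow_neg_atTop hα
  have h2 : Tendsto (fun x : ℝ => -t * x ^ (-α)) atTop (𝓝 (-t * 0)) := h1.const_mul _
  have h3 := (Real.continuous_exp.tendsto _).comp h2
  simp only [mul_zero, Real.exp_zero] at h3
  refine h3.congr' ?_
  filter_upwards [eventually_gt_atTop (0:ℝ)] with x hx
  simp [phiA, not_le.mpr hx, Function.comp]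





lemma lint_Ioc {α t : ℝ} (hα : 0 < α) (ht : 0 < t) {c : ℝ} (hc : 0 < c) :
    ∫⁻ y in Ioc (0:ℝ) c, ENNReal.ofReal (densA α t y)
      = ENNReal.ofReal (Real.exp (-t * c ^ (-α))) := by
  have hderiv : ∀ x ∈ Ioo (0:ℝ) c, HasDerivAt (phiA α t) (densA α t x) x :=
    fun x hx => phiA_hasDerivAt hx.1
  have hpos : ∀ x ∈ Ioo (0:ℝ) c, 0 ≤ densA α t x :=
    fun x hx => densA_nonneg hα ht hx.1.le
  have hcont := phiA_contOn hα ht c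
  have hint : IntegrableOn (densA α t) (Ioc 0 c) :=
    intervalIntegral.integrableOn_deriv_of_nonneg hcont hderiv hpos
  have hval : ∫ y in Ioc (0:ℝ) c, densA α t y = Real.exp (-t * c ^ (-α)) := by
    rw [← intervalIntegral.integral_of_le hc.le,
      intervalIntegral.integral_eq_sub_of_hasDeriv_right_of_le hc.le hcont
        (fun x hx => (hderiv x hx).hasDerivWithinAt)
        ((intervalIntegrable_iff_integrableOn_Ioc_of_le hc.le).2 hint)]
    simp [phiA, not_le.mpr hc]
  rw [← ofReal_integral_eq_lintegral_ofReal hint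
      ((ae_restrict_iff' measurableSet_Ioc).2 (ae_of_all _ fun x hx => densA_nonneg hα ht hx.1.le)),
    hval]

lemma lint_Ioi {α t : ℝ} (hα : 0 < α) (ht : 0 < t) :
    ∫⁻ y in Ioi (0:ℝ), ENNReal.ofReal (densA α t y) = 1 := by
  have hderiv : ∀ x ∈ Ioi (0:ℝ), HasDerivAt (phiA α t) (densA α t x) x :=
    fun x hx => phiA_hasDerivAt hx
  have hpos : ∀ x ∈ Ioi (0:ℝ), 0 ≤ densA α t x :=
    fun x hx => densA_nonneg hα ht (le_of_lt hx)
  have hint : IntegrableOn (densA α t) (Ioi 0) :=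
    integrableOn_Ioi_deriv_of_nonneg (phiA_contWithinAt hα ht) hderiv hpos
      (phiA_tendsto_one hα ht)
  have hval : ∫ y in Ioi (0:ℝ), densA α t y = 1 := by
    rw [integral_Ioi_of_hasDerivAt_of_nonneg (phiA_contWithinAt hα ht) hderiv hpos
      (phiA_tendsto_one hα ht)]
    simp [phiA]
  rw [← ofReal_integral_eq_lintegral_ofReal hint
      ((ae_restrict_iff' measurableSet_Ioi).2 (ae_of_all _ fun x hx => densA_nonneg hα ht (le_of_lt hx))),
    hval, ENNReal.ofReal_one]




lemma measurableSet_boxA (K : ℕ) (u : Fin K → ℝ) : MeasurableSet (boxA K u) := by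
  have : boxA K u = ((⋂ i : Fin K, {x : Fin (K+1) → ℝ | x i.succ < x i.castSucc}) ∩
      {x : Fin (K+1) → ℝ | 0 < x (Fin.last K)}) ∩
      ⋂ k : Fin K, {x : Fin (K+1) → ℝ | x k.succ ≤ u k * x k.castSucc} := by
    ext x
    simp only [boxA, mem_setOf_eq, mem_inter_iff, mem_iInter, Fin.strictAnti_iff_succ_lt]
  rw [this]
  refine (MeasurableSet.inter (MeasurableSet.iInter fun i => ?_) ?_).inter
    (MeasurableSet.iInter fun k => ?_)
  · exact measurableSet_lt (measurable_pi_apply _) (measurable_pi_apply _)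
  · exact measurableSet_lt measurable_const (measurable_pi_apply _)
  · exact measurableSet_le (measurable_pi_apply _) ((measurable_pi_apply _).const_mul _)

lemma boxA_pos {K : ℕ} {u : Fin K → ℝ} {x : Fin (K+1) → ℝ} (hx : x ∈ boxA K u) (i : Fin (K+1)) :
    0 < x i :=
  lt_of_lt_of_le hx.1.2 (hx.1.1.antitone (Fin.le_last i))

lemma measurable_FA (α t : ℝ) (K : ℕ) : Measurable (FA α t K) := by
  apply Measurable.mul
  · exact (measurable_const.mul (by fun_prop : Measurable fun x : Fin (K+1) → ℝ => -t * x (Fin.last K) ^ (-α)).exp)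
  · exact Finset.measurable_prod _ fun i _ =>
      (by fun_prop)

lemma FA_nonneg {α t : ℝ} (hα : 0 < α) (ht : 0 < t) {K : ℕ} {x : Fin (K+1) → ℝ}
    (hx : ∀ i, 0 < x i) : 0 ≤ FA α t K x := by
  refine mul_nonneg (mul_nonneg (by positivity) (Real.exp_nonneg _)) ?_
  exact Finset.prod_nonneg fun i _ => by
    have := (hx i).le; positivity

lemma snoc_mem_boxA_iff {K : ℕ} {u : Fin (K+1) → ℝ} (xs : Fin (K+1) → ℝ) (y : ℝ) :
    Fin.snoc xs y ∈ boxA (K+1) u ↔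
      (xs ∈ boxA K (fun k => u k.castSucc) ∧
        (y ∈ Ioc 0 (u (Fin.last K) * xs (Fin.last K)) ∧ y < xs (Fin.last K))) := by
  constructor
  · rintro ⟨⟨hanti, hpos⟩, hratio⟩
    rw [Fin.snoc_last] at hpos
    have hlt : y < xs (Fin.last K) := by
      have := hanti (Fin.castSucc_lt_last (Fin.last K))
      rwa [Fin.snoc_last, Fin.snoc_castSucc] at this
    have hle : y ≤ u (Fin.last K) * xs (Fin.last K) := by
      have := hratio (Fin.last K)
      rwa [Fin.succ_last, Fin.snoc_last, Fin.snoc_castSucc] at this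
    refine ⟨⟨⟨Fin.strictAnti_iff_succ_lt.2 fun i => ?_, hpos.trans hlt⟩, fun k => ?_⟩,
      ⟨hpos, hle⟩, hlt⟩
    · have := Fin.strictAnti_iff_succ_lt.1 hanti i.castSucc
      rwa [Fin.succ_castSucc, Fin.snoc_castSucc, Fin.snoc_castSucc] at this
    · have := hratio k.castSucc
      rwa [Fin.succ_castSucc, Fin.snoc_castSucc, Fin.snoc_castSucc] at this
  · rintro ⟨⟨⟨hanti, hpos⟩, hratio⟩, ⟨⟨hy0, hyle⟩, hylt⟩⟩
    refine ⟨⟨Fin.strictAnti_iff_succ_lt.2 fun i => ?_, by rwa [Fin.snoc_last]⟩, fun k => ?_⟩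
    · refine Fin.lastCases ?_ (fun j => ?_) i
      · rw [Fin.succ_last, Fin.snoc_last, Fin.snoc_castSucc]; exact hylt
      · rw [Fin.succ_castSucc, Fin.snoc_castSucc, Fin.snoc_castSucc]
        exact hanti (Fin.castSucc_lt_succ (i := j))
    · refine Fin.lastCases ?_ (fun j => ?_) k
      · rw [Fin.succ_last, Fin.snoc_last, Fin.snoc_castSucc]; exact hyle
      · rw [Fin.succ_castSucc, Fin.snoc_castSucc, Fin.snoc_castSucc]
        exact hratio j






lemma key_base {α : ℝ} (hα : 0 < α) {t : ℝ} (ht : 0 < t) (u : Fin 0 → ℝ) :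
    ∫⁻ x in boxA 0 u, ENNReal.ofReal (FA α t 0 x)
      = ENNReal.ofReal (∏ k : Fin 0, u k ^ (α * ((k : ℕ) + 1))) := by
  have e := MeasurableEquiv.funUnique (Fin 1) ℝ
  rw [← lintegral_indicator (measurableSet_boxA 0 u)]
  erw [← ((volume_preserving_funUnique (Fin 1) ℝ).symm _).lintegral_comp
    ((measurable_FA α t 0).ennreal_ofReal.indicator (measurableSet_boxA 0 u))]
  have hpt : ∀ y : ℝ, ((boxA 0 u).indicator fun x => ENNReal.ofReal (FA α t 0 x))
      ((MeasurableEquiv.funUnique (Fin 1) ℝ).symm y)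
      = (Ioi (0:ℝ)).indicator (fun y => ENNReal.ofReal (densA α t y)) y := by
    intro y
    have hsymm : (MeasurableEquiv.funUnique (Fin 1) ℝ).symm y = fun _ : Fin 1 => y := by
      ext i; simp [MeasurableEquiv.funUnique]
    rw [hsymm]
    have hmem : (fun _ : Fin 1 => y) ∈ boxA 0 u ↔ y ∈ Ioi (0:ℝ) := by
      simp only [boxA, mem_setOf_eq, mem_Ioi]
      constructor
      · rintro ⟨⟨-, h⟩, -⟩; exact h
      · intro h; exact ⟨⟨@Subsingleton.strictAnti _ _ _ _ (by exact Fin.subsingleton_one) _, h⟩, fun k => k.elim0⟩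
    by_cases hy : y ∈ Ioi (0:ℝ)
    · rw [indicator_of_mem (hmem.2 hy), indicator_of_mem hy]
      congr 1
      simp only [FA, densA]
      rw [Fin.prod_univ_one]
      ring
    · rw [indicator_of_notMem (fun h => hy (hmem.1 h)), indicator_of_notMem hy]
  simp_rw [hpt]
  rw [lintegral_indicator measurableSet_Ioi, lint_Ioi hα ht]
  simp






lemma key_step {α : ℝ} (hα : 0 < α) (K : ℕ)
    (ih : ∀ t : ℝ, 0 < t → ∀ u : Fin K → ℝ, (∀ k, u k ∈ Ioc (0:ℝ) 1) →
      ∫⁻ x in boxA K u, ENNReal.ofReal (FA α t K x)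
        = ENNReal.ofReal (∏ k : Fin K, u k ^ (α * ((k : ℕ) + 1))))
    (t : ℝ) (ht : 0 < t) (u : Fin (K+1) → ℝ) (hu : ∀ k, u k ∈ Ioc (0:ℝ) 1) :
    ∫⁻ x in boxA (K+1) u, ENNReal.ofReal (FA α t (K+1) x)
      = ENNReal.ofReal (∏ k : Fin (K+1), u k ^ (α * ((k : ℕ) + 1))) := by
  set ul : ℝ := u (Fin.last K) with hul_def
  have hul : 0 < ul := (hu _).1
  have hul1 : ul ≤ 1 := (hu _).2
  set t' : ℝ := t * ul ^ (-α) with ht'_def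
  have ht' : 0 < t' := mul_pos ht (Real.rpow_pos_of_pos hul _)
  set u' : Fin K → ℝ := fun k => u k.castSucc with hu'_def
  have hu' : ∀ k, u' k ∈ Ioc (0:ℝ) 1 := fun k => hu _
  set S' : Set (Fin (K+1) → ℝ) := boxA K u' with hS'_def
  set g : (Fin (K+2) → ℝ) → ℝ≥0∞ := fun x => ENNReal.ofReal (FA α t (K+1) x) with hg_def
  set cst : ℝ := ul ^ (α * ((K:ℝ) + 1)) with hcst_def
  have hcst0 : 0 ≤ cst := Real.rpow_nonneg hul.le _
  -- the inner integral computation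
  have hinner : ∀ xs : Fin (K+1) → ℝ,
      (∫⁻ y : ℝ, ((boxA (K+1) u).indicator g) (Fin.snoc xs y))
        = S'.indicator (fun xs => ENNReal.ofReal (cst * FA α t' K xs)) xs := by
    intro xs
    by_cases hxs : xs ∈ S'
    · set b : ℝ := xs (Fin.last K) with hb_def
      have hb : 0 < b := hxs.1.2
      have hc : 0 < ul * b := mul_pos hul hb
      set T : Set ℝ := Ioc 0 (ul * b) ∩ Iio b with hT_def
      have h1 : ∀ y : ℝ, ((boxA (K+1) u).indicator g) (Fin.snoc xs y)
          = T.indicator (fun y => g (Fin.snoc xs y)) y := by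
        intro y
        by_cases hy : y ∈ T
        · rw [indicator_of_mem hy, indicator_of_mem
            ((snoc_mem_boxA_iff xs y).2 ⟨hxs, hy.1, hy.2⟩)]
        · rw [indicator_of_notMem hy, indicator_of_notMem
            (fun h => hy ⟨((snoc_mem_boxA_iff xs y).1 h).2.1, ((snoc_mem_boxA_iff xs y).1 h).2.2⟩)]
      simp_rw [h1]
      rw [lintegral_indicator (measurableSet_Ioc.inter measurableSet_Iio)]
      have hTae : T =ᵐ[volume] Ioc (0:ℝ) (ul * b) := by
        have hsub : Ioc (0:ℝ) (ul * b) \ T ⊆ {b} := by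
          rintro y ⟨hy1, hy2⟩
          have : ¬ y < b := fun h => hy2 ⟨hy1, h⟩
          have hyb : b ≤ y := not_lt.1 this
          have : y ≤ b := hy1.2.trans (by nlinarith)
          simp [le_antisymm this hyb]
        have h0 : volume (Ioc (0:ℝ) (ul * b) \ T) = 0 :=
          measure_mono_null hsub (measure_singleton b)
        have h0' : volume (T \ Ioc (0:ℝ) (ul * b)) = 0 := by
          have : T \ Ioc (0:ℝ) (ul * b) = ∅ := by
            apply diff_eq_empty.2; exact inter_subset_left
          simp [this]
        exact (MeasureTheory.ae_eq_set.2 ⟨h0', h0⟩)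
      rw [setLIntegral_congr hTae]
      -- rewrite the integrand on Ioc 0 (ul * b)
      set C : ℝ := t ^ (K+1) * ∏ i : Fin (K+1), α * (xs i) ^ (-(1 + α)) with hC_def
      have hC0 : 0 ≤ C := by
        refine mul_nonneg (by positivity) (Finset.prod_nonneg fun i _ => ?_)
        have := (boxA_pos hxs i).le
        positivity
      have h2 : ∀ y : ℝ, g (Fin.snoc xs y) = ENNReal.ofReal C * ENNReal.ofReal (densA α t y) := by
        intro y
        have hFA : FA α t (K+1) (Fin.snoc xs y) = C * densA α t y := by
          rw [FA, Fin.prod_univ_castSucc]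
          simp only [Fin.snoc_last, Fin.snoc_castSucc]
          rw [densA, hC_def]
          ring
        simp only [hg_def]
        rw [hFA, ENNReal.ofReal_mul hC0]
      simp_rw [h2]
      rw [lintegral_const_mul' _ _ ENNReal.ofReal_ne_top, lint_Ioc hα ht hc,
        ← ENNReal.ofReal_mul hC0, indicator_of_mem hxs]
      congr 1
      -- real identity
      have hrw : (ul * b) ^ (-α) = ul ^ (-α) * b ^ (-α) := Real.mul_rpow hul.le hb.le
      have hcore : cst * t' ^ (K+1) = t ^ (K+1) := by
        have h1 : cst = (ul ^ α) ^ (K+1) := by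
          rw [hcst_def, Real.rpow_mul hul.le, ← Real.rpow_natCast (ul ^ α) (K+1)]
          norm_num
        rw [h1, ht'_def, ← mul_pow]
        congr 1
        rw [mul_comm t, ← mul_assoc, ← Real.rpow_add hul, add_neg_cancel, Real.rpow_zero, one_mul]
      have hexp : -t * (ul ^ (-α) * b ^ (-α)) = -t' * b ^ (-α) := by rw [ht'_def]; ring
      rw [FA, hC_def, hrw, hexp]
      linear_combination (-(Real.exp (-t' * b ^ (-α))) *
        (∏ i : Fin (K+1), α * xs i ^ (-(1+α)))) * hcore
    · have h1 : ∀ y : ℝ, ((boxA (K+1) u).indicator g) (Fin.snoc xs y) = 0 := by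
        intro y
        exact indicator_of_notMem (fun h => hxs ((snoc_mem_boxA_iff xs y).1 h).1) g
      simp_rw [h1]
      rw [lintegral_zero, indicator_of_notMem hxs]
  -- outer computation
  set e := MeasurableEquiv.piFinSuccAbove (fun _ : Fin (K+2) => ℝ) (Fin.last (K+1)) with he_def
  have hmeas : Measurable ((boxA (K+1) u).indicator g) :=
    (measurable_FA α t (K+1)).ennreal_ofReal.indicator (measurableSet_boxA _ u)
  have hsymm : ∀ (y : ℝ) (xs : Fin (K+1) → ℝ), e.symm (y, xs) = Fin.snoc xs y := by
    intro y xs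
    rw [he_def, MeasurableEquiv.piFinSuccAbove_symm_apply]
    exact Fin.insertNth_last' y xs
  calc ∫⁻ x in boxA (K+1) u, ENNReal.ofReal (FA α t (K+1) x)
      = ∫⁻ x, ((boxA (K+1) u).indicator g) x := by
        rw [lintegral_indicator (measurableSet_boxA _ u)]
    _ = ∫⁻ p : ℝ × (Fin (K+1) → ℝ), ((boxA (K+1) u).indicator g) (e.symm p) := by
        rw [((volume_preserving_piFinSuccAbove (fun _ : Fin (K+2) => ℝ)
          (Fin.last (K+1))).symm e).lintegral_comp hmeas]
    _ = ∫⁻ xs : Fin (K+1) → ℝ, ∫⁻ y : ℝ, ((boxA (K+1) u).indicator g) (e.symm (y, xs)) := by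
        rw [MeasureTheory.Measure.volume_eq_prod]
        exact lintegral_prod_symm _ (hmeas.comp e.symm.measurable).aemeasurable
    _ = ∫⁻ xs : Fin (K+1) → ℝ,
          S'.indicator (fun xs => ENNReal.ofReal (cst * FA α t' K xs)) xs := by
        congr 1
        ext xs
        simp_rw [hsymm]
        exact hinner xs
    _ = ∫⁻ xs in S', ENNReal.ofReal (cst * FA α t' K xs) := by
        rw [lintegral_indicator (measurableSet_boxA _ u')]
    _ = ENNReal.ofReal cst * ∫⁻ xs in S', ENNReal.ofReal (FA α t' K xs) := by
        simp_rw [ENNReal.ofReal_mul hcst0]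
        rw [lintegral_const_mul' _ _ ENNReal.ofReal_ne_top]
    _ = ENNReal.ofReal cst * ENNReal.ofReal (∏ k : Fin K, u' k ^ (α * ((k : ℕ) + 1))) := by
        rw [ih t' ht' u' hu']
    _ = ENNReal.ofReal (∏ k : Fin (K+1), u k ^ (α * ((k : ℕ) + 1))) := by
        rw [← ENNReal.ofReal_mul hcst0]
        congr 1
        rw [Fin.prod_univ_castSucc (f := fun k : Fin (K+1) => u k ^ (α * ((k : ℕ) + 1)))]
        simp only [Fin.coe_castSucc, Fin.val_last, hu'_def, hcst_def, hul_def]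
        ring

lemma keyA {α : ℝ} (hα : 0 < α) : ∀ (K : ℕ) (t : ℝ), 0 < t → ∀ u : Fin K → ℝ,
    (∀ k, u k ∈ Ioc (0:ℝ) 1) →
    ∫⁻ x in boxA K u, ENNReal.ofReal (FA α t K x)
      = ENNReal.ofReal (∏ k : Fin K, u k ^ (α * ((k : ℕ) + 1))) := by
  intro K
  induction K with
  | zero => intro t ht u _; exact key_base hα ht u
  | succ K ih => intro t ht u hu; exact key_step hα K ih t ht u hu

/-- Equation (3.22): integrating the joint density of the `K+1` largest flights of the
α-selfsimilar one-sided Lévy process over the region where the consecutive ratios are at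
most `u_k` gives `∏ u_k^{αk}`.  Here the coordinate `x i` represents `x_{i+1}`. -/
theorem consecutive_ratios_law (α t : ℝ) (hα : 0 < α) (ht : 0 < t)
    (K : ℕ) (hK : 1 ≤ K) (u : Fin K → ℝ) (hu : ∀ k, u k ∈ Set.Ioc (0:ℝ) 1) :
    (∫ x in {x : Fin (K + 1) → ℝ | (StrictAnti x ∧ 0 < x (Fin.last K)) ∧
        ∀ k : Fin K, x k.succ ≤ u k * x k.castSucc},
      t ^ (K + 1) * Real.exp (-t * (x (Fin.last K)) ^ (-α)) *
        ∏ i : Fin (K + 1), α * (x i) ^ (-(1 + α)))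
    = ∏ k : Fin K, (u k) ^ (α * ((k : ℕ) + 1)) := by
  show ∫ x in boxA K u, FA α t K x = _
  have hnn : 0 ≤ᵐ[volume.restrict (boxA K u)] FA α t K :=
    (ae_restrict_iff' (measurableSet_boxA K u)).2
      (ae_of_all _ fun x hx => FA_nonneg hα ht (boxA_pos hx))
  rw [MeasureTheory.integral_eq_lintegral_of_nonneg_ae hnn
    (measurable_FA α t K).aestronglyMeasurable, keyA hα K t ht u hu,
    ENNReal.toReal_ofReal (Finset.prod_nonneg fun k _ => Real.rpow_nonneg (hu k).1.le _)]
end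

section
/- Let 0 < α < 1, and let ξ be a nonnegative real random variable on a probability space (Ω, P) whose Laplace transform satisfies E[exp(−ω·ξ)] = 1/(1 + G_α(ω)) for all real ω ≥ 0. Then E[ξ] = α/(1−α). -/
open Real MeasureTheory ProbabilityTheory

/-- For `0 < α < 1`, the function `G_α(ω) = α ∫_0^1 (1 - e^{-ωu}) u^{-(1+α)} du`. -/
noncomputable def Galpha (α ω : ℝ) : ℝ :=
  α * ∫ u in (0:ℝ)..1, (1 - Real.exp (-ω * u)) * u ^ (-(1 + α))

open intervalIntegral Set Filter


lemma one_sub_exp_le (t : ℝ) : 1 - Real.exp (-t) ≤ t := by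
  nlinarith [Real.add_one_le_exp (-t)]

lemma le_one_sub_exp (t : ℝ) (ht : 0 ≤ t) : t - t^2/2 ≤ 1 - Real.exp (-t) := by
  have h1 : (∫ s in (0:ℝ)..t, Real.exp (-s)) = 1 - Real.exp (-t) := by
    rw [intervalIntegral.integral_comp_neg (fun x => Real.exp x)]
    simp [integral_exp]
  have h2 : (∫ s in (0:ℝ)..t, (1 - s)) = t - t^2/2 := by
    rw [intervalIntegral.integral_sub _root_.intervalIntegrable_const
      intervalIntegral.intervalIntegrable_id]
    simp [integral_id]; try ring
  rw [← h1, ← h2]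
  apply intervalIntegral.integral_mono_on ht
  · exact (_root_.intervalIntegrable_const).sub intervalIntegral.intervalIntegrable_id
  · exact (Real.continuous_exp.comp continuous_neg).intervalIntegrable 0 t
  · intro s _
    nlinarith [Real.add_one_le_exp (-s)]

section
variable {α ω : ℝ} (hα0 : 0 < α) (hα1 : α < 1) (hω : 0 ≤ ω)
include hα0 hα1

lemma eq_upper (u : ℝ) (hu : u ∈ Set.Icc (0:ℝ) 1) :
    ω * u ^ (-α) = ω * u * u ^ (-(1 + α)) := by
  rcases eq_or_lt_of_le hu.1 with h | h
  · rw [← h, Real.zero_rpow (show -α ≠ 0 by intro hc; nlinarith),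
      Real.zero_rpow (show -(1+α) ≠ 0 by intro hc; nlinarith)]
    ring
  · rw [show ω * u * u ^ (-(1+α)) = ω * (u ^ (1:ℝ) * u ^ (-(1+α))) by rw [Real.rpow_one]; ring,
      ← Real.rpow_add h]
    rw [show (1:ℝ) + -(1+α) = -α by ring]

lemma eq_lower (u : ℝ) (hu : u ∈ Set.Icc (0:ℝ) 1) :
    ω * u ^ (-α) - ω^2/2 * u ^ (1-α) = (ω * u - (ω*u)^2/2) * u ^ (-(1 + α)) := by
  rcases eq_or_lt_of_le hu.1 with h | h
  · rw [← h, Real.zero_rpow (show -α ≠ 0 by intro hc; nlinarith),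
      Real.zero_rpow (show (1:ℝ)-α ≠ 0 by intro hc; nlinarith),
      Real.zero_rpow (show -(1+α) ≠ 0 by intro hc; nlinarith)]
    ring
  · have h1 : u ^ (-α) = u * u ^ (-(1+α)) := by
      rw [show u * u ^ (-(1+α)) = u ^ (1:ℝ) * u ^ (-(1+α)) by rw [Real.rpow_one],
        ← Real.rpow_add h, show (1:ℝ) + -(1+α) = -α by ring]
    have h2 : u ^ ((1:ℝ)-α) = u^2 * u ^ (-(1+α)) := by
      rw [show u^2 = u ^ (2:ℝ) by rw [← Real.rpow_natCast u 2]; norm_num,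
        ← Real.rpow_add h, show (2:ℝ) + -(1+α) = 1-α by ring]
    rw [h1, h2]; ring

include hω

lemma II_F : IntervalIntegrable (fun u => (1 - Real.exp (-ω * u)) * u ^ (-(1 + α))) volume 0 1 := by
  have hr : IntervalIntegrable (fun u : ℝ => ω * u ^ (-α)) volume 0 1 :=
    (intervalIntegrable_rpow' (by linarith) (a := 0) (b := 1)).const_mul ω
  apply hr.mono_fun
  · rw [Set.uIoc_of_le (by norm_num : (0:ℝ) ≤ 1)]
    apply ContinuousOn.aestronglyMeasurable _ measurableSet_Ioc
    exact ((by fun_prop : Continuous fun u : ℝ => 1 - Real.exp (-ω * u)).continuousOn).mul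
      (ContinuousOn.rpow_const continuousOn_id fun x hx => Or.inl hx.1.ne')
  · filter_upwards [ae_restrict_mem measurableSet_uIoc] with u hu
    rw [Set.uIoc_of_le (by norm_num : (0:ℝ) ≤ 1)] at hu
    have hu0 : 0 < u := hu.1
    have h1 : 0 ≤ 1 - Real.exp (-ω * u) := by
      have : Real.exp (-ω * u) ≤ 1 := by
        rw [Real.exp_le_one_iff]; nlinarith
      linarith
    have h2 : 1 - Real.exp (-ω * u) ≤ ω * u := by
      nlinarith [Real.add_one_le_exp (-ω * u)]
    have h3 : (0:ℝ) ≤ u ^ (-(1+α)) := Real.rpow_nonneg hu0.le _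
    rw [Real.norm_eq_abs, Real.norm_eq_abs, abs_of_nonneg (mul_nonneg h1 h3),
      abs_of_nonneg (by positivity)]
    calc (1 - Real.exp (-ω * u)) * u ^ (-(1+α)) ≤ ω * u * u ^ (-(1+α)) :=
          mul_le_mul_of_nonneg_right h2 h3
      _ = ω * u ^ (-α) := (eq_upper hα0 hα1 u ⟨hu0.le, hu.2⟩).symm

lemma Galpha_le : Galpha α ω ≤ ω * (α / (1-α)) := by
  have hJ1 : (∫ u in (0:ℝ)..1, u ^ (-α)) = 1/(1-α) := by
    rw [integral_rpow (Or.inl (by linarith : (-1:ℝ) < -α)), Real.one_rpow,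
      Real.zero_rpow (show -α + 1 ≠ 0 by intro hc; nlinarith),
      show -α + 1 = 1 - α by ring]
    ring
  have key : (∫ u in (0:ℝ)..1, (1 - Real.exp (-ω * u)) * u ^ (-(1 + α)))
      ≤ ∫ u in (0:ℝ)..1, ω * u ^ (-α) := by
    apply intervalIntegral.integral_mono_on (by norm_num) (II_F hα0 hα1 hω)
    · exact (intervalIntegrable_rpow' (by linarith) (a := 0) (b := 1)).const_mul ω
    · intro u hu
      rw [eq_upper hα0 hα1 u hu]
      have h3 : (0:ℝ) ≤ u ^ (-(1+α)) := Real.rpow_nonneg hu.1 _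
      apply mul_le_mul_of_nonneg_right _ h3
      nlinarith [Real.add_one_le_exp (-ω * u), hu.1]
  unfold Galpha
  calc α * ∫ u in (0:ℝ)..1, (1 - Real.exp (-ω * u)) * u ^ (-(1 + α))
      ≤ α * ∫ u in (0:ℝ)..1, ω * u ^ (-α) := mul_le_mul_of_nonneg_left key hα0.le
    _ = ω * (α / (1-α)) := by
        rw [intervalIntegral.integral_const_mul, hJ1]; ring

lemma le_Galpha : ω * (α / (1-α)) - ω^2 * (α/(2*(2-α))) ≤ Galpha α ω := by
  have hJ1 : (∫ u in (0:ℝ)..1, u ^ (-α)) = 1/(1-α) := by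
    rw [integral_rpow (Or.inl (by linarith : (-1:ℝ) < -α)), Real.one_rpow,
      Real.zero_rpow (show -α + 1 ≠ 0 by intro hc; nlinarith),
      show -α + 1 = 1 - α by ring]
    ring
  have hJ2 : (∫ u in (0:ℝ)..1, u ^ (1-α)) = 1/(2-α) := by
    rw [integral_rpow (Or.inl (by linarith : (-1:ℝ) < 1-α)), Real.one_rpow,
      Real.zero_rpow (show 1-α + 1 ≠ 0 by intro hc; nlinarith),
      show 1-α + 1 = 2 - α by ring]
    ring
  have hI1 : IntervalIntegrable (fun u : ℝ => u ^ (-α)) volume 0 1 :=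
    intervalIntegrable_rpow' (by linarith)
  have hI2 : IntervalIntegrable (fun u : ℝ => u ^ (1-α)) volume 0 1 :=
    intervalIntegrable_rpow' (by linarith)
  have key : (∫ u in (0:ℝ)..1, (ω * u ^ (-α) - ω^2/2 * u ^ (1-α)))
      ≤ ∫ u in (0:ℝ)..1, (1 - Real.exp (-ω * u)) * u ^ (-(1 + α)) := by
    apply intervalIntegral.integral_mono_on (by norm_num)
      ((hI1.const_mul ω).sub (hI2.const_mul (ω^2/2))) (II_F hα0 hα1 hω)
    intro u hu
    rw [eq_lower hα0 hα1 u hu]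
    have h3 : (0:ℝ) ≤ u ^ (-(1+α)) := Real.rpow_nonneg hu.1 _
    apply mul_le_mul_of_nonneg_right _ h3
    have ht : 0 ≤ ω * u := mul_nonneg hω hu.1
    have h4 := le_one_sub_exp (ω * u) ht
    rw [show -(ω*u) = -ω*u by ring] at h4
    nlinarith [h4]
  have hval : (∫ u in (0:ℝ)..1, (ω * u ^ (-α) - ω^2/2 * u ^ (1-α)))
      = ω * (1/(1-α)) - ω^2/2 * (1/(2-α)) := by
    rw [intervalIntegral.integral_sub (hI1.const_mul ω) (hI2.const_mul (ω^2/2)),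
      intervalIntegral.integral_const_mul, intervalIntegral.integral_const_mul, hJ1, hJ2]
  have h2 : α * (ω * (1/(1-α)) - ω^2/2 * (1/(2-α))) ≤ Galpha α ω := by
    unfold Galpha
    apply mul_le_mul_of_nonneg_left _ hα0.le
    rw [← hval]; exact key
  calc ω * (α / (1-α)) - ω^2 * (α/(2*(2-α)))
      = α * (ω * (1/(1-α)) - ω^2/2 * (1/(2-α))) := by
        have h1 : (1:ℝ) - α ≠ 0 := by intro hc; nlinarith
        have h2 : (2:ℝ) - α ≠ 0 := by intro hc; nlinarith
        field_simp
    _ ≤ Galpha α ω := h2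

lemma Galpha_nonneg : 0 ≤ Galpha α ω := by
  unfold Galpha
  apply mul_nonneg hα0.le
  apply intervalIntegral.integral_nonneg (by norm_num)
  intro u hu
  have h1 : Real.exp (-ω * u) ≤ 1 := by
    rw [Real.exp_le_one_iff]; nlinarith [hu.1]
  have h3 : (0:ℝ) ≤ u ^ (-(1+α)) := Real.rpow_nonneg hu.1 _
  nlinarith

end

/-- Equation (4.11): if ξ has Laplace transform `1/(1 + G_α)` then `E[ξ] = α/(1-α)`. -/
theorem mean_of_G_alpha_law (α : ℝ) (hα0 : 0 < α) (hα1 : α < 1)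
    {Ω : Type*} [MeasurableSpace Ω] (P : Measure Ω) [IsProbabilityMeasure P]
    (ξ : Ω → ℝ) (hmeas : Measurable ξ) (hnonneg : ∀ x, 0 ≤ ξ x)
    (hlaplace : ∀ ω : ℝ, 0 ≤ ω → (∫ x, Real.exp (-ω * ξ x) ∂P) = 1 / (1 + Galpha α ω)) :
    (∫ x, ξ x ∂P) = α / (1 - α) := by
  have h1α : (0:ℝ) < 1 - α := by linarith
  set c : ℝ := α / (1 - α) with hc
  have hcpos : 0 ≤ c := by positivity
  set K : ℝ := α / (2*(2-α)) with hKdef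
  set ω : ℕ → ℝ := fun n => 1 / ((n:ℝ)+1) with hωdef
  have hωpos : ∀ n, 0 < ω n := fun n => by positivity
  set G : ℕ → ℝ := fun n => Galpha α (ω n) with hGdef
  have hGnn : ∀ n, 0 ≤ G n := fun n => Galpha_nonneg hα0 hα1 (hωpos n).le
  have hGle : ∀ n, G n ≤ ω n * c := fun n => Galpha_le hα0 hα1 (hωpos n).le
  have hGge : ∀ n, ω n * c - (ω n)^2 * K ≤ G n := fun n => le_Galpha hα0 hα1 (hωpos n).le
  have hden : ∀ n, (0:ℝ) < 1 + G n := fun n => by linarith [hGnn n]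
  set N : ℕ → ℝ := fun n => (n:ℝ)+1 with hNdef
  have hNpos : ∀ n, 0 < N n := fun n => by positivity
  have hNω : ∀ n, N n * ω n = 1 := by
    intro n
    have : ((n:ℝ)+1) ≠ 0 := by positivity
    show ((n:ℝ)+1) * (1/((n:ℝ)+1)) = 1; exact mul_one_div_cancel this
  have hω0 : Filter.Tendsto ω atTop (nhds 0) := tendsto_one_div_add_atTop_nhds_zero_nat
  have hNG : Filter.Tendsto (fun n => N n * G n) atTop (nhds c) := by
    apply tendsto_of_tendsto_of_tendsto_of_le_of_le
      (g := fun n => c - ω n * K) (h := fun n => c)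
    · simpa only [zero_mul, sub_zero] using
        (tendsto_const_nhds (x := c) (f := atTop (α := ℕ))).sub (hω0.mul_const K)
    · exact tendsto_const_nhds
    · intro n
      show c - ω n * K ≤ N n * G n
      have h2 := mul_le_mul_of_nonneg_left (hGge n) (hNpos n).le
      have h3 : N n * (ω n * c - (ω n)^2 * K) = c - ω n * K := by
        linear_combination (c - ω n * K) * hNω n
      linarith
    · intro n
      show N n * G n ≤ c
      have h2 := mul_le_mul_of_nonneg_left (hGle n) (hNpos n).le
      have h3 : N n * (ω n * c) = c := by linear_combination c * hNω n
      linarith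
  have hG0 : Filter.Tendsto G atTop (nhds 0) := by
    apply tendsto_of_tendsto_of_tendsto_of_le_of_le
      (g := fun _ => (0:ℝ)) (h := fun n => ω n * c) tendsto_const_nhds
      (by simpa only [zero_mul] using hω0.mul_const c) hGnn hGle
  have T : Filter.Tendsto (fun n => N n * (1 - 1/(1 + G n))) atTop (nhds c) := by
    have hdiv : Filter.Tendsto (fun n => (N n * G n)/(1 + G n)) atTop (nhds (c/(1+0))) :=
      hNG.div (tendsto_const_nhds.add hG0) (by norm_num)
    norm_num at hdiv
    apply hdiv.congr
    intro n
    field_simp [(hden n).ne']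
    ring
  -- integrability
  have hexp_int : ∀ w : ℝ, 0 ≤ w → Integrable (fun x => Real.exp (-w * ξ x)) P := by
    intro w hw
    apply Integrable.mono' (integrable_const (1:ℝ))
    · exact ((hmeas.const_mul (-w)).exp).aestronglyMeasurable
    · filter_upwards with x
      rw [Real.norm_eq_abs, abs_of_nonneg (Real.exp_nonneg _), Real.exp_le_one_iff]
      nlinarith [hnonneg x]
  have hf_int : ∀ n, Integrable (fun x => 1 - Real.exp (-(ω n) * ξ x)) P :=
    fun n => (integrable_const 1).sub (hexp_int _ (hωpos n).le)
  have hf_nn : ∀ n x, 0 ≤ 1 - Real.exp (-(ω n) * ξ x) := by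
    intro n x
    have : Real.exp (-(ω n) * ξ x) ≤ 1 := by
      rw [Real.exp_le_one_iff]
      nlinarith [hnonneg x, hωpos n]
    linarith
  have hA : ∀ n, (∫ x, (1 - Real.exp (-(ω n) * ξ x)) ∂P) = 1 - 1/(1 + G n) := by
    intro n
    rw [integral_sub (integrable_const 1) (hexp_int _ (hωpos n).le),
      hlaplace (ω n) (hωpos n).le]
    simp [hGdef]
  -- pointwise limit
  have hpt : ∀ x, Filter.Tendsto (fun n => N n * (1 - Real.exp (-(ω n) * ξ x)))
      atTop (nhds (ξ x)) := by
    intro x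
    set t := ξ x with ht
    have hderiv : HasDerivAt (fun w : ℝ => 1 - Real.exp (-w * t)) t 0 := by
      have h1 : HasDerivAt (fun w : ℝ => -w * t) (-t) 0 := by
        simpa using ((hasDerivAt_id (0:ℝ)).neg.mul_const t)
      have h2 := h1.exp
      have h3 := (hasDerivAt_const (0:ℝ) (1:ℝ)).sub h2
      simpa using h2.const_sub 1
    rw [hasDerivAt_iff_tendsto_slope] at hderiv
    have hseq : Filter.Tendsto ω atTop (nhdsWithin (0:ℝ) {(0:ℝ)}ᶜ) := by
      apply tendsto_nhdsWithin_of_tendsto_nhds_of_eventually_within _ hω0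
      filter_upwards with n
      exact (hωpos n).ne'
    have hcomp := hderiv.comp hseq
    apply hcomp.congr
    intro n
    simp only [Function.comp_apply, slope_def_field]
    rw [show -(0:ℝ) * t = 0 by ring, Real.exp_zero]
    rw [hωdef]
    have hn : ((n:ℝ)+1) ≠ 0 := by positivity
    field_simp
    ring
  -- Fatou
  have hmf : ∀ n, Measurable (fun x =>
      ENNReal.ofReal (N n * (1 - Real.exp (-(ω n) * ξ x)))) := by
    intro n
    exact ((measurable_const.sub ((hmeas.const_mul (-(ω n))).exp)).const_mul (N n)).ennreal_ofReal
  have hlint : ∀ n, (∫⁻ x, ENNReal.ofReal (N n * (1 - Real.exp (-(ω n) * ξ x))) ∂P)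
      = ENNReal.ofReal (N n * (1 - 1/(1 + G n))) := by
    intro n
    rw [← MeasureTheory.ofReal_integral_eq_lintegral_ofReal
      (((hf_int n)).const_mul (N n))
      (Filter.Eventually.of_forall fun x => mul_nonneg (hNpos n).le (hf_nn n x))]
    rw [MeasureTheory.integral_const_mul, hA n]
  have hkey : (∫⁻ x, ENNReal.ofReal (ξ x) ∂P) ≤ ENNReal.ofReal c := by
    have hfatou := MeasureTheory.lintegral_liminf_le hmf (μ := P) (u := atTop)
    have hl1 : (∫⁻ x, Filter.liminf (fun n =>
        ENNReal.ofReal (N n * (1 - Real.exp (-(ω n) * ξ x)))) atTop ∂P)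
        = ∫⁻ x, ENNReal.ofReal (ξ x) ∂P := by
      apply lintegral_congr
      intro x
      exact (ENNReal.tendsto_ofReal (hpt x)).liminf_eq
    have hl2 : Filter.liminf (fun n => ∫⁻ x,
        ENNReal.ofReal (N n * (1 - Real.exp (-(ω n) * ξ x))) ∂P) atTop
        = ENNReal.ofReal c := by
      have : (fun n => ∫⁻ x, ENNReal.ofReal (N n * (1 - Real.exp (-(ω n) * ξ x))) ∂P)
          = fun n => ENNReal.ofReal (N n * (1 - 1/(1 + G n))) := funext hlint
      rw [this]
      exact (ENNReal.tendsto_ofReal T).liminf_eq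
    rw [hl1, hl2] at hfatou
    exact hfatou
  -- integrability of ξ
  have hxi_int : Integrable ξ P := by
    refine ⟨hmeas.aestronglyMeasurable, ?_⟩
    rw [hasFiniteIntegral_iff_norm]
    have : (∫⁻ x, ENNReal.ofReal ‖ξ x‖ ∂P) = ∫⁻ x, ENNReal.ofReal (ξ x) ∂P := by
      apply lintegral_congr
      intro x
      rw [Real.norm_eq_abs, abs_of_nonneg (hnonneg x)]
    rw [this]
    exact lt_of_le_of_lt hkey ENNReal.ofReal_lt_top
  have hval : (∫ x, ξ x ∂P) = (∫⁻ x, ENNReal.ofReal (ξ x) ∂P).toReal :=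
    integral_eq_lintegral_of_nonneg_ae (Filter.Eventually.of_forall hnonneg)
      hmeas.aestronglyMeasurable
  have hupper : (∫ x, ξ x ∂P) ≤ c := by
    rw [hval]
    calc (∫⁻ x, ENNReal.ofReal (ξ x) ∂P).toReal
        ≤ (ENNReal.ofReal c).toReal := ENNReal.toReal_mono ENNReal.ofReal_ne_top hkey
      _ = c := ENNReal.toReal_ofReal hcpos
  have hlower : c ≤ ∫ x, ξ x ∂P := by
    apply le_of_tendsto T
    filter_upwards with n
    rw [← hA n, ← MeasureTheory.integral_const_mul]
    apply integral_mono ((hf_int n).const_mul (N n)) hxi_int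
    intro x
    have h1 : 1 - Real.exp (-(ω n) * ξ x) ≤ ω n * ξ x := by
      have := one_sub_exp_le (ω n * ξ x)
      rw [show -(ω n * ξ x) = -(ω n) * ξ x by ring] at this
      exact this
    calc N n * (1 - Real.exp (-(ω n) * ξ x)) ≤ N n * (ω n * ξ x) :=
          mul_le_mul_of_nonneg_left h1 (hNpos n).le
      _ = ξ x := by rw [← mul_assoc, hNω n, one_mul]
  linarith
end

section
/- Let 0 < α < 1, and let ξ be a nonnegative real random variable on a probability space (Ω, P) whose Laplace transform satisfies E[exp(−ω·ξ)] = 1/(1 + G_α(ω)) for all real ω ≥ 0. Then Var(ξ) = α/((1−α)²(2−α)). -/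
open Real MeasureTheory ProbabilityTheory Filter

lemma taylor1 (s : ℝ) : 1 - s ≤ Real.exp (-s) := by
  linarith [Real.add_one_le_exp (-s)]

lemma taylor2 (s : ℝ) (hs : 0 ≤ s) : Real.exp (-s) ≤ 1 - s + s ^ 2 / 2 := by
  have key : MonotoneOn (fun t : ℝ => 1 - t + t ^ 2 / 2 - Real.exp (-t)) (Set.Ici 0) := by
    apply monotoneOn_of_deriv_nonneg (convex_Ici 0)
    · fun_prop
    · fun_prop
    · intro x hx
      have hd : HasDerivAt (fun t : ℝ => 1 - t + t ^ 2 / 2 - Real.exp (-t))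
          (-1 + x + Real.exp (-x)) x := by
        have h1 : HasDerivAt (fun t : ℝ => 1 - t + t ^ 2 / 2) (-1 + x) x := by
          have := ((hasDerivAt_id x).const_sub 1).add
            (((hasDerivAt_pow 2 x)).div_const 2)
          simpa [mul_comm, Pi.add_def] using this
        have h2 : HasDerivAt (fun t : ℝ => Real.exp (-t)) (-Real.exp (-x)) x := by
          have := (Real.hasDerivAt_exp (-x)).comp x ((hasDerivAt_id x).neg)
          simpa [Function.comp_def] using this
        simpa [Pi.sub_def] using h1.sub h2
      rw [hd.deriv]
      linarith [taylor1 x]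
  have h0 := key Set.self_mem_Ici hs hs
  simp only [ne_eq, OfNat.ofNat_ne_zero, not_false_eq_true, zero_pow, zero_div, add_zero,
    sub_zero, neg_zero, Real.exp_zero] at h0
  linarith

lemma taylor3 (s : ℝ) (hs : 0 ≤ s) : 1 - s + s ^ 2 / 2 - s ^ 3 / 6 ≤ Real.exp (-s) := by
  have key : MonotoneOn (fun t : ℝ => Real.exp (-t) - (1 - t + t ^ 2 / 2 - t ^ 3 / 6)) (Set.Ici 0) := by
    apply monotoneOn_of_deriv_nonneg (convex_Ici 0)
    · fun_prop
    · fun_prop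
    · intro x hx
      rw [interior_Ici] at hx
      have hd : HasDerivAt (fun t : ℝ => Real.exp (-t) - (1 - t + t ^ 2 / 2 - t ^ 3 / 6))
          (-Real.exp (-x) - (-1 + x - x ^ 2 / 2)) x := by
        have h2 : HasDerivAt (fun t : ℝ => Real.exp (-t)) (-Real.exp (-x)) x := by
          have := (Real.hasDerivAt_exp (-x)).comp x ((hasDerivAt_id x).neg)
          simpa [Function.comp_def] using this
        have h1 : HasDerivAt (fun t : ℝ => 1 - t + t ^ 2 / 2 - t ^ 3 / 6) (-1 + x - x ^ 2 / 2) x := by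
          have := (((hasDerivAt_id x).const_sub 1).add
            ((hasDerivAt_pow 2 x).div_const 2)).sub ((hasDerivAt_pow 3 x).div_const 6)
          simp only [Pi.add_def, Pi.sub_def, id] at this
          refine this.congr_deriv ?_
          norm_num
          ring
        exact h2.sub h1
      rw [hd.deriv]
      have := taylor2 x hx.le
      linarith
  have h0 := key Set.self_mem_Ici hs hs
  simp only [neg_zero, Real.exp_zero, ne_eq, OfNat.ofNat_ne_zero, not_false_eq_true, zero_pow,
    zero_div, add_zero, sub_zero] at h0
  linarith

lemma integrableOn_rpow_Ioc {r : ℝ} (hr : -1 < r) :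
    IntegrableOn (fun u : ℝ => u ^ r) (Set.Ioc 0 1) := by
  have := intervalIntegral.intervalIntegrable_rpow' (a := 0) (b := 1) hr
  exact this.1

lemma int_rpow_Ioc {r : ℝ} (hr : -1 < r) :
    ∫ u in Set.Ioc (0:ℝ) 1, u ^ r = 1 / (r + 1) := by
  rw [← intervalIntegral.integral_of_le zero_le_one, integral_rpow (Or.inl hr)]
  rw [Real.zero_rpow (by linarith : r + 1 ≠ 0), Real.one_rpow]
  ring

lemma rpow_succ (u : ℝ) (hu : 0 < u) (c : ℝ) : u * u ^ c = u ^ (c + 1) := by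
  rw [Real.rpow_add hu, Real.rpow_one]; ring

section Gbounds

variable {α : ℝ} (hα0 : 0 < α) (hα1 : α < 1)

lemma meas_F (ω : ℝ) : Measurable (fun u : ℝ => (1 - Real.exp (-ω * u)) * u ^ (-(1 + α))) := by
  apply Measurable.mul
  · fun_prop
  · exact measurable_id.pow_const _

include hα1 in
omit hα0 in
lemma integrableOn_F (ω : ℝ) (hω : 0 ≤ ω) :
    IntegrableOn (fun u : ℝ => (1 - Real.exp (-ω * u)) * u ^ (-(1 + α))) (Set.Ioc 0 1) := by
  apply Integrable.mono (g := fun u : ℝ => ω * u ^ (-α))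
  · exact (integrableOn_rpow_Ioc (by linarith)).const_mul ω
  · exact ((meas_F ω).aestronglyMeasurable).restrict
  · rw [ae_restrict_iff' measurableSet_Ioc]
    filter_upwards with u
    intro hu
    have hu0 : 0 < u := hu.1
    have hs : 0 ≤ ω * u := mul_nonneg hω hu0.le
    have h1 : 0 ≤ 1 - Real.exp (-(ω * u)) := by
      have := Real.exp_le_one_iff.2 (by linarith : -(ω*u) ≤ 0)
      linarith
    have h2 : 1 - Real.exp (-(ω * u)) ≤ ω * u := by linarith [taylor1 (ω * u)]
    have hp : (0:ℝ) ≤ u ^ (-(1+α)) := (Real.rpow_pos_of_pos hu0 _).le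
    rw [Real.norm_eq_abs, Real.norm_eq_abs, neg_mul,
      abs_of_nonneg (mul_nonneg h1 hp), abs_of_nonneg]
    · calc (1 - Real.exp (-(ω * u))) * u ^ (-(1+α)) ≤ (ω * u) * u ^ (-(1+α)) := by
            exact mul_le_mul_of_nonneg_right h2 hp
        _ = ω * (u * u ^ (-(1+α))) := by ring
        _ = ω * u ^ (-α) := by rw [rpow_succ u hu0]; norm_num
    · exact mul_nonneg hω (Real.rpow_pos_of_pos hu0 _).le

omit hα0 hα1 in
lemma G_eq (ω : ℝ) : Galpha α ω =
    α * ∫ u in Set.Ioc (0:ℝ) 1, (1 - Real.exp (-ω * u)) * u ^ (-(1 + α)) := by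
  rw [Galpha, intervalIntegral.integral_of_le zero_le_one]

include hα0 hα1 in
lemma G_nonneg (ω : ℝ) (hω : 0 ≤ ω) : 0 ≤ Galpha α ω := by
  rw [G_eq]
  apply mul_nonneg hα0.le
  apply setIntegral_nonneg measurableSet_Ioc
  intro u hu
  have hu0 : 0 < u := hu.1
  have h1 : Real.exp (-ω * u) ≤ 1 := by
    apply Real.exp_le_one_iff.2
    nlinarith
  exact mul_nonneg (by linarith) (Real.rpow_pos_of_pos hu0 _).le

include hα0 hα1 in
lemma G_le (ω : ℝ) (hω : 0 ≤ ω) : Galpha α ω ≤ α / (1 - α) * ω := by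
  rw [G_eq]
  have key : (∫ u in Set.Ioc (0:ℝ) 1, (1 - Real.exp (-ω * u)) * u ^ (-(1 + α)))
      ≤ ∫ u in Set.Ioc (0:ℝ) 1, ω * u ^ (-α) := by
    apply setIntegral_mono_on (integrableOn_F hα1 ω hω)
      ((integrableOn_rpow_Ioc (by linarith)).const_mul ω) measurableSet_Ioc
    intro u hu
    have hu0 : 0 < u := hu.1
    have hp : (0:ℝ) ≤ u ^ (-(1+α)) := (Real.rpow_pos_of_pos hu0 _).le
    have h2 : 1 - Real.exp (-ω * u) ≤ ω * u := by
      rw [neg_mul]; linarith [taylor1 (ω * u)]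
    calc (1 - Real.exp (-ω * u)) * u ^ (-(1+α)) ≤ (ω * u) * u ^ (-(1+α)) :=
          mul_le_mul_of_nonneg_right h2 hp
      _ = ω * (u * u ^ (-(1+α))) := by ring
      _ = ω * u ^ (-α) := by rw [rpow_succ u hu0]; norm_num
  have h3 : (∫ u in Set.Ioc (0:ℝ) 1, ω * u ^ (-α)) = ω / (1 - α) := by
    rw [integral_const_mul, int_rpow_Ioc (by linarith : (-1:ℝ) < -α)]
    have : -α + 1 = 1 - α := by ring
    rw [this]
    ring
  calc α * ∫ u in Set.Ioc (0:ℝ) 1, (1 - Real.exp (-ω * u)) * u ^ (-(1 + α))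
      ≤ α * (ω / (1-α)) := by
        rw [← h3]; exact mul_le_mul_of_nonneg_left key hα0.le
    _ = α / (1-α) * ω := by ring

end Gbounds

section Gbounds

variable {α : ℝ} (hα0 : 0 < α) (hα1 : α < 1)

include hα1 in
omit hα0 in
lemma integrableOn_H (ω : ℝ) (hω : 0 ≤ ω) :
    IntegrableOn (fun u : ℝ => (Real.exp (-ω * u) - 1 + ω * u) * u ^ (-(1 + α)))
      (Set.Ioc 0 1) := by
  have h := (((integrableOn_rpow_Ioc (by linarith : (-1:ℝ) < -α)).const_mul ω).sub
    (integrableOn_F hα1 ω hω))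
  apply h.congr
  rw [Filter.EventuallyEq, ae_restrict_iff' measurableSet_Ioc]
  filter_upwards with u hu
  have hu0 : 0 < u := hu.1
  have : ω * u ^ (-α) = (ω * u) * u ^ (-(1+α)) := by
    rw [mul_assoc, rpow_succ u hu0]; norm_num
  simp only [Pi.sub_apply]
  rw [this]; ring

include hα1 in
omit hα0 in
lemma G_diff_eq (ω : ℝ) (hω : 0 ≤ ω) : α / (1 - α) * ω - Galpha α ω =
    α * ∫ u in Set.Ioc (0:ℝ) 1, (Real.exp (-ω * u) - 1 + ω * u) * u ^ (-(1 + α)) := by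
  have h1 : α / (1 - α) * ω = α * ∫ u in Set.Ioc (0:ℝ) 1, ω * u ^ (-α) := by
    rw [integral_const_mul, int_rpow_Ioc (by linarith : (-1:ℝ) < -α)]
    have : -α + 1 = 1 - α := by ring
    rw [this]; field_simp
  rw [h1, G_eq, ← mul_sub, ← integral_sub
    ((integrableOn_rpow_Ioc (by linarith : (-1:ℝ) < -α)).const_mul ω)
    (integrableOn_F hα1 ω hω)]
  congr 1
  apply setIntegral_congr_fun measurableSet_Ioc
  intro u hu
  have hu0 : 0 < u := hu.1
  have h4 : ω * u ^ (-α) = (ω * u) * u ^ (-(1+α)) := by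
    rw [mul_assoc, rpow_succ u hu0]; norm_num
  dsimp only
  rw [h4]; ring

include hα0 hα1 in
lemma G_diff_le (ω : ℝ) (hω : 0 ≤ ω) :
    α / (1 - α) * ω - Galpha α ω ≤ α / (2 * (2 - α)) * ω ^ 2 := by
  rw [G_diff_eq hα1 ω hω]
  have key : (∫ u in Set.Ioc (0:ℝ) 1, (Real.exp (-ω * u) - 1 + ω * u) * u ^ (-(1 + α)))
      ≤ ∫ u in Set.Ioc (0:ℝ) 1, ω ^ 2 / 2 * u ^ (1 - α) := by
    apply setIntegral_mono_on (integrableOn_H hα1 ω hω)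
      ((integrableOn_rpow_Ioc (by linarith)).const_mul _) measurableSet_Ioc
    intro u hu
    have hu0 : 0 < u := hu.1
    have hs : 0 ≤ ω * u := mul_nonneg hω hu0.le
    have ht := taylor2 (ω * u) hs
    have hp : (0:ℝ) ≤ u ^ (-(1+α)) := (Real.rpow_pos_of_pos hu0 _).le
    have h2 : Real.exp (-ω * u) - 1 + ω * u ≤ (ω * u) ^ 2 / 2 := by
      rw [neg_mul]; linarith
    calc (Real.exp (-ω * u) - 1 + ω * u) * u ^ (-(1+α))
        ≤ ((ω * u) ^ 2 / 2) * u ^ (-(1+α)) := mul_le_mul_of_nonneg_right h2 hp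
      _ = ω ^ 2 / 2 * (u * (u * u ^ (-(1+α)))) := by ring
      _ = ω ^ 2 / 2 * u ^ (1 - α) := by
          rw [rpow_succ u hu0]
          have : -(1+α) + 1 = -α := by ring
          rw [this, rpow_succ u hu0]
          have : -α + 1 = 1 - α := by ring
          rw [this]
  have h3 : (∫ u in Set.Ioc (0:ℝ) 1, ω ^ 2 / 2 * u ^ (1 - α)) = ω ^ 2 / 2 * (1 / (2 - α)) := by
    rw [integral_const_mul, int_rpow_Ioc (by linarith : (-1:ℝ) < 1 - α)]
    have : 1 - α + 1 = 2 - α := by ring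
    rw [this]
  calc α * ∫ u in Set.Ioc (0:ℝ) 1, (Real.exp (-ω * u) - 1 + ω * u) * u ^ (-(1 + α))
      ≤ α * (ω ^ 2 / 2 * (1 / (2 - α))) := by
        rw [← h3]; exact mul_le_mul_of_nonneg_left key hα0.le
    _ = α / (2 * (2 - α)) * ω ^ 2 := by field_simp

include hα0 hα1 in
lemma G_diff_ge (ω : ℝ) (hω : 0 ≤ ω) :
    α / (2 * (2 - α)) * ω ^ 2 - α / (6 * (3 - α)) * ω ^ 3 ≤
      α / (1 - α) * ω - Galpha α ω := by
  rw [G_diff_eq hα1 ω hω]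
  have hint : IntegrableOn (fun u : ℝ => ω ^ 2 / 2 * u ^ (1 - α) - ω ^ 3 / 6 * u ^ (2 - α))
      (Set.Ioc (0:ℝ) 1) :=
    ((integrableOn_rpow_Ioc (by linarith)).const_mul _).sub
      ((integrableOn_rpow_Ioc (by linarith)).const_mul _)
  have key : (∫ u in Set.Ioc (0:ℝ) 1, (ω ^ 2 / 2 * u ^ (1 - α) - ω ^ 3 / 6 * u ^ (2 - α)))
      ≤ ∫ u in Set.Ioc (0:ℝ) 1, (Real.exp (-ω * u) - 1 + ω * u) * u ^ (-(1 + α)) := by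
    apply setIntegral_mono_on hint (integrableOn_H hα1 ω hω) measurableSet_Ioc
    intro u hu
    have hu0 : 0 < u := hu.1
    have hs : 0 ≤ ω * u := mul_nonneg hω hu0.le
    have ht := taylor3 (ω * u) hs
    have hp : (0:ℝ) ≤ u ^ (-(1+α)) := (Real.rpow_pos_of_pos hu0 _).le
    have h2 : (ω * u) ^ 2 / 2 - (ω * u) ^ 3 / 6 ≤ Real.exp (-ω * u) - 1 + ω * u := by
      rw [neg_mul]; linarith
    have e1 : u * u ^ (-(1+α)) = u ^ (-α) := by
      rw [rpow_succ u hu0]; norm_num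
    have e2 : u * u ^ (-α) = u ^ (1 - α) := by
      rw [rpow_succ u hu0, show -α + 1 = 1 - α from by ring]
    have e3 : u * u ^ (1-α) = u ^ (2 - α) := by
      rw [rpow_succ u hu0, show 1 - α + 1 = 2 - α from by ring]
    calc ω ^ 2 / 2 * u ^ (1 - α) - ω ^ 3 / 6 * u ^ (2 - α)
        = ((ω * u) ^ 2 / 2 - (ω * u) ^ 3 / 6) * u ^ (-(1+α)) := by
          rw [← e2, ← e1, ← e3, ← e2, ← e1]; ring
      _ ≤ (Real.exp (-ω * u) - 1 + ω * u) * u ^ (-(1+α)) := mul_le_mul_of_nonneg_right h2 hp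
  have h3 : (∫ u in Set.Ioc (0:ℝ) 1, (ω ^ 2 / 2 * u ^ (1 - α) - ω ^ 3 / 6 * u ^ (2 - α)))
      = ω ^ 2 / 2 * (1 / (2 - α)) - ω ^ 3 / 6 * (1 / (3 - α)) := by
    rw [integral_sub ((integrableOn_rpow_Ioc (by linarith)).const_mul _)
      ((integrableOn_rpow_Ioc (by linarith)).const_mul _),
      integral_const_mul, integral_const_mul,
      int_rpow_Ioc (by linarith : (-1:ℝ) < 1 - α), int_rpow_Ioc (by linarith : (-1:ℝ) < 2 - α)]
    have e1 : 1 - α + 1 = 2 - α := by ring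
    have e2 : 2 - α + 1 = 3 - α := by ring
    rw [e1, e2]
  calc α / (2 * (2 - α)) * ω ^ 2 - α / (6 * (3 - α)) * ω ^ 3
      = α * (ω ^ 2 / 2 * (1 / (2 - α)) - ω ^ 3 / 6 * (1 / (3 - α))) := by
        field_simp
    _ ≤ α * ∫ u in Set.Ioc (0:ℝ) 1, (Real.exp (-ω * u) - 1 + ω * u) * u ^ (-(1 + α)) := by
        rw [← h3]; exact mul_le_mul_of_nonneg_left key hα0.le

end Gbounds

section limits

variable {α : ℝ} (hα0 : 0 < α) (hα1 : α < 1)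

noncomputable def tseq (n : ℕ) : ℝ := 1 / (n + 1)

lemma tseq_pos (n : ℕ) : 0 < tseq n := by unfold tseq; positivity

lemma tseq_tendsto : Tendsto tseq atTop (nhds 0) :=
  tendsto_one_div_add_atTop_nhds_zero_nat

include hα0 hα1 in
lemma G_tseq_tendsto : Tendsto (fun n => Galpha α (tseq n)) atTop (nhds 0) := by
  apply squeeze_zero (fun n => G_nonneg hα0 hα1 _ (tseq_pos n).le)
    (fun n => G_le hα0 hα1 _ (tseq_pos n).le)
  simpa using tseq_tendsto.const_mul (α / (1 - α))

include hα0 hα1 in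
lemma oneG_tendsto : Tendsto (fun n => 1 + Galpha α (tseq n)) atTop (nhds 1) := by
  simpa using tendsto_const_nhds.add (G_tseq_tendsto hα0 hα1)

include hα0 hα1 in
lemma oneG_pos (n : ℕ) : 0 < 1 + Galpha α (tseq n) := by
  linarith [G_nonneg hα0 hα1 _ (tseq_pos n).le]

include hα0 hα1 in
lemma Gdiv_tendsto : Tendsto (fun n => Galpha α (tseq n) / tseq n) atTop
    (nhds (α / (1 - α))) := by
  apply tendsto_of_tendsto_of_tendsto_of_le_of_le
    (g := fun n => α / (1 - α) - α / (2 * (2 - α)) * tseq n) (h := fun n => α / (1 - α))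
  · simpa using tendsto_const_nhds.sub (tseq_tendsto.const_mul (α / (2 * (2 - α))))
  · exact tendsto_const_nhds
  · intro n
    rw [le_div_iff₀ (tseq_pos n)]
    have := G_diff_le hα0 hα1 (tseq n) (tseq_pos n).le
    nlinarith [this, sq_nonneg (tseq n)]
  · intro n
    rw [div_le_iff₀ (tseq_pos n)]
    have := G_le hα0 hα1 (tseq n) (tseq_pos n).le
    linarith

include hα0 hα1 in
lemma Bdiv_tendsto : Tendsto
    (fun n => (α / (1 - α) * tseq n - Galpha α (tseq n)) / (tseq n) ^ 2) atTop
    (nhds (α / (2 * (2 - α)))) := by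
  apply tendsto_of_tendsto_of_tendsto_of_le_of_le
    (g := fun n => α / (2 * (2 - α)) - α / (6 * (3 - α)) * tseq n)
    (h := fun n => α / (2 * (2 - α)))
  · simpa using tendsto_const_nhds.sub (tseq_tendsto.const_mul (α / (6 * (3 - α))))
  · exact tendsto_const_nhds
  · intro n
    rw [le_div_iff₀ (pow_pos (tseq_pos n) 2)]
    have := G_diff_ge hα0 hα1 (tseq n) (tseq_pos n).le
    nlinarith [this]
  · intro n
    rw [div_le_iff₀ (pow_pos (tseq_pos n) 2)]
    exact G_diff_le hα0 hα1 (tseq n) (tseq_pos n).le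

include hα0 hα1 in
lemma tendsto_A : Tendsto
    (fun n => (1 - 1 / (1 + Galpha α (tseq n))) / tseq n) atTop
    (nhds (α / (1 - α))) := by
  have h := (Gdiv_tendsto hα0 hα1).div (oneG_tendsto hα0 hα1) one_ne_zero
  rw [div_one] at h
  apply h.congr
  intro n
  have h1 := oneG_pos hα0 hα1 n
  have h2 := tseq_pos n
  have e1 : 1 - 1 / (1 + Galpha α (tseq n)) = Galpha α (tseq n) / (1 + Galpha α (tseq n)) := by
    field_simp
    ring

  simp only [Pi.div_apply]
  rw [e1, div_div, div_div, mul_comm]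

include hα0 hα1 in
lemma tendsto_B : Tendsto
    (fun n => (1 / (1 + Galpha α (tseq n)) - 1 + α / (1 - α) * tseq n) / (tseq n) ^ 2) atTop
    (nhds (α / (2 * (2 - α)) + (α / (1 - α)) ^ 2)) := by
  have h := (((Bdiv_tendsto hα0 hα1).add
      ((Gdiv_tendsto hα0 hα1).const_mul (α / (1 - α)))).div (oneG_tendsto hα0 hα1) one_ne_zero)
  rw [div_one] at h
  have : α / (2 * (2 - α)) + α / (1 - α) * (α / (1 - α)) = α / (2 * (2 - α)) + (α / (1 - α)) ^ 2 := by
    ring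
  rw [this] at h
  apply h.congr
  intro n
  have h1 := oneG_pos hα0 hα1 n
  have h2 := tseq_pos n

  have hne : (1:ℝ) - α ≠ 0 := by linarith
  simp only [Pi.div_apply]
  rw [div_eq_div_iff h1.ne' (pow_ne_zero 2 h2.ne')]
  field_simp
  ring

end limits

/-- Equation (4.12): if ξ has Laplace transform `1/(1 + G_α)` then
`Var(ξ) = α/((1-α)²(2-α))`. -/
theorem variance_of_G_alpha_law (α : ℝ) (hα0 : 0 < α) (hα1 : α < 1)
    {Ω : Type*} [MeasurableSpace Ω] (P : Measure Ω) [IsProbabilityMeasure P]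
    (ξ : Ω → ℝ) (hmeas : Measurable ξ) (hnonneg : ∀ x, 0 ≤ ξ x)
    (hlaplace : ∀ ω : ℝ, 0 ≤ ω → (∫ x, Real.exp (-ω * ξ x) ∂P) = 1 / (1 + Galpha α ω)) :
    variance ξ P = α / ((1 - α) ^ 2 * (2 - α)) := by
  set m : ℝ := α / (1 - α) with hm
  have hexp_meas : ∀ ω : ℝ, Measurable fun x => Real.exp (-ω * ξ x) :=
    fun ω => (hmeas.const_mul (-ω)).exp
  have hexp_int : ∀ ω : ℝ, 0 ≤ ω → Integrable (fun x => Real.exp (-ω * ξ x)) P := by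
    intro ω hω
    apply Integrable.mono' (integrable_const 1) (hexp_meas ω).aestronglyMeasurable
    filter_upwards with x
    rw [Real.norm_eq_abs, abs_of_pos (Real.exp_pos _)]
    apply Real.exp_le_one_iff.2
    nlinarith [hnonneg x]
  -- first moment
  set F : ℕ → Ω → ℝ := fun n x => (1 - Real.exp (-tseq n * ξ x)) / tseq n with hF
  have hF_meas : ∀ n, Measurable (F n) :=
    fun n => (measurable_const.sub (hexp_meas _)).div_const _
  have hF_int : ∀ n, Integrable (F n) P :=
    fun n => ((integrable_const 1).sub (hexp_int _ (tseq_pos n).le)).div_const _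
  have hF_integral : ∀ n, ∫ x, F n x ∂P = (1 - 1 / (1 + Galpha α (tseq n))) / tseq n := by
    intro n
    rw [hF]
    rw [integral_div, integral_sub (integrable_const 1) (hexp_int _ (tseq_pos n).le),
      integral_const, hlaplace _ (tseq_pos n).le]
    simp
  have hF_nonneg : ∀ n x, 0 ≤ F n x := by
    intro n x
    apply div_nonneg _ (tseq_pos n).le
    have h1 : Real.exp (-tseq n * ξ x) ≤ 1 :=
      Real.exp_le_one_iff.2 (by nlinarith [hnonneg x, tseq_pos n])
    linarith
  have hF_le : ∀ n x, F n x ≤ ξ x := by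
    intro n x
    rw [hF]
    rw [div_le_iff₀ (tseq_pos n), neg_mul]
    linarith [taylor1 (tseq n * ξ x)]
  have hF_tendsto : ∀ x, Tendsto (fun n => F n x) atTop (nhds (ξ x)) := by
    intro x
    apply tendsto_of_tendsto_of_tendsto_of_le_of_le
      (g := fun n => ξ x - tseq n * (ξ x ^ 2 / 2)) (h := fun n => ξ x)
    · simpa using tendsto_const_nhds.sub (tseq_tendsto.mul_const (ξ x ^ 2 / 2))
    · exact tendsto_const_nhds
    · intro n
      rw [hF]
      dsimp only
      rw [le_div_iff₀ (tseq_pos n), neg_mul]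
      have := taylor2 (tseq n * ξ x) (mul_nonneg (tseq_pos n).le (hnonneg x))
      nlinarith [this]
    · exact fun n => hF_le n x
  have key1 : ∫⁻ x, ENNReal.ofReal (ξ x) ∂P ≤ ENNReal.ofReal m := by
    have h1 : ∫⁻ x, ENNReal.ofReal (ξ x) ∂P
        = ∫⁻ x, liminf (fun n => ENNReal.ofReal (F n x)) atTop ∂P := by
      apply lintegral_congr
      intro x
      rw [(ENNReal.tendsto_ofReal (hF_tendsto x)).liminf_eq]
    rw [h1]
    refine le_trans (lintegral_liminf_le fun n => (hF_meas n).ennreal_ofReal) ?_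
    have h2 : ∀ n, ∫⁻ x, ENNReal.ofReal (F n x) ∂P
        = ENNReal.ofReal ((1 - 1 / (1 + Galpha α (tseq n))) / tseq n) := by
      intro n
      rw [← ofReal_integral_eq_lintegral_ofReal (hF_int n)
        (Filter.Eventually.of_forall (hF_nonneg n)), hF_integral n]
    have h3 : Tendsto (fun n => ∫⁻ x, ENNReal.ofReal (F n x) ∂P) atTop
        (nhds (ENNReal.ofReal m)) := by
      simp_rw [h2]
      exact ENNReal.tendsto_ofReal (tendsto_A hα0 hα1)
    rw [h3.liminf_eq]
  have hξ_int : Integrable ξ P := by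
    refine ⟨hmeas.aestronglyMeasurable, ?_⟩
    rw [hasFiniteIntegral_iff_ofReal (Filter.Eventually.of_forall hnonneg)]
    exact lt_of_le_of_lt key1 ENNReal.ofReal_lt_top
  have hEξ : ∫ x, ξ x ∂P = m := by
    have hdct := tendsto_integral_of_dominated_convergence (μ := P) (F := F) (f := ξ) ξ
      (fun n => (hF_int n).aestronglyMeasurable) hξ_int
      (fun n => Filter.Eventually.of_forall fun x => by
        rw [Real.norm_eq_abs, abs_of_nonneg (hF_nonneg n x)]; exact hF_le n x)
      (Filter.Eventually.of_forall hF_tendsto)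
    have h2 : Tendsto (fun n => ∫ x, F n x ∂P) atTop (nhds m) := by
      simp_rw [hF_integral]
      exact tendsto_A hα0 hα1
    exact tendsto_nhds_unique hdct h2
  -- second moment
  set H : ℕ → Ω → ℝ := fun n x => (Real.exp (-tseq n * ξ x) - 1 + tseq n * ξ x) / tseq n ^ 2
    with hH
  have hH_meas : ∀ n, Measurable (H n) :=
    fun n => (((hexp_meas _).sub measurable_const).add (hmeas.const_mul _)).div_const _
  have hH_int : ∀ n, Integrable (H n) P :=
    fun n => (((hexp_int _ (tseq_pos n).le).sub (integrable_const 1)).add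
      (hξ_int.const_mul _)).div_const _
  have hH_integral : ∀ n, ∫ x, H n x ∂P
      = (1 / (1 + Galpha α (tseq n)) - 1 + m * tseq n) / tseq n ^ 2 := by
    intro n
    rw [hH]
    have hint1 : Integrable (fun x => Real.exp (-tseq n * ξ x) - 1) P :=
      (hexp_int _ (tseq_pos n).le).sub (integrable_const 1)
    have hint2 : Integrable (fun x => tseq n * ξ x) P := hξ_int.const_mul _
    have hmul : ∫ x, tseq n * ξ x ∂P = tseq n * m := by
      rw [integral_const_mul, hEξ]
    rw [integral_div, integral_add hint1 hint2,
      integral_sub (hexp_int _ (tseq_pos n).le) (integrable_const 1),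
      integral_const, hmul, hlaplace _ (tseq_pos n).le]
    have huniv : P.real Set.univ = 1 := by simp
    rw [huniv]
    simp only [smul_eq_mul, one_mul]
    ring
  have hH_nonneg : ∀ n x, 0 ≤ H n x := by
    intro n x
    apply div_nonneg _ (pow_pos (tseq_pos n) 2).le
    have := taylor1 (tseq n * ξ x)
    rw [← neg_mul] at this
    linarith
  have hH_le : ∀ n x, H n x ≤ ξ x ^ 2 / 2 := by
    intro n x
    rw [hH]
    dsimp only
    rw [div_le_iff₀ (pow_pos (tseq_pos n) 2), neg_mul]
    have := taylor2 (tseq n * ξ x) (mul_nonneg (tseq_pos n).le (hnonneg x))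
    nlinarith [this]
  have hH_tendsto : ∀ x, Tendsto (fun n => H n x) atTop (nhds (ξ x ^ 2 / 2)) := by
    intro x
    apply tendsto_of_tendsto_of_tendsto_of_le_of_le
      (g := fun n => ξ x ^ 2 / 2 - tseq n * (ξ x ^ 3 / 6)) (h := fun n => ξ x ^ 2 / 2)
    · simpa using tendsto_const_nhds.sub (tseq_tendsto.mul_const (ξ x ^ 3 / 6))
    · exact tendsto_const_nhds
    · intro n
      rw [hH]
      dsimp only
      rw [le_div_iff₀ (pow_pos (tseq_pos n) 2), neg_mul]
      have := taylor3 (tseq n * ξ x) (mul_nonneg (tseq_pos n).le (hnonneg x))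
      nlinarith [this]
    · exact fun n => hH_le n x
  set c₂ : ℝ := α / (2 * (2 - α)) with hc₂
  have key2 : ∫⁻ x, ENNReal.ofReal (ξ x ^ 2 / 2) ∂P ≤ ENNReal.ofReal (c₂ + m ^ 2) := by
    have h1 : ∫⁻ x, ENNReal.ofReal (ξ x ^ 2 / 2) ∂P
        = ∫⁻ x, liminf (fun n => ENNReal.ofReal (H n x)) atTop ∂P := by
      apply lintegral_congr
      intro x
      rw [(ENNReal.tendsto_ofReal (hH_tendsto x)).liminf_eq]
    rw [h1]
    refine le_trans (lintegral_liminf_le fun n => (hH_meas n).ennreal_ofReal) ?_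
    have h2 : ∀ n, ∫⁻ x, ENNReal.ofReal (H n x) ∂P
        = ENNReal.ofReal ((1 / (1 + Galpha α (tseq n)) - 1 + m * tseq n) / tseq n ^ 2) := by
      intro n
      rw [← ofReal_integral_eq_lintegral_ofReal (hH_int n)
        (Filter.Eventually.of_forall (hH_nonneg n)), hH_integral n]
    have h3 : Tendsto (fun n => ∫⁻ x, ENNReal.ofReal (H n x) ∂P) atTop
        (nhds (ENNReal.ofReal (c₂ + m ^ 2))) := by
      simp_rw [h2]
      exact ENNReal.tendsto_ofReal (tendsto_B hα0 hα1)
    rw [h3.liminf_eq]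
  have hhalf_int : Integrable (fun x => ξ x ^ 2 / 2) P := by
    refine ⟨((hmeas.pow_const 2).div_const 2).aestronglyMeasurable, ?_⟩
    rw [hasFiniteIntegral_iff_ofReal (Filter.Eventually.of_forall fun x => by positivity)]
    exact lt_of_le_of_lt key2 ENNReal.ofReal_lt_top
  have hEξ2half : ∫ x, ξ x ^ 2 / 2 ∂P = c₂ + m ^ 2 := by
    have hdct := tendsto_integral_of_dominated_convergence (μ := P) (F := H)
      (f := fun x => ξ x ^ 2 / 2) (fun x => ξ x ^ 2 / 2)
      (fun n => (hH_int n).aestronglyMeasurable) hhalf_int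
      (fun n => Filter.Eventually.of_forall fun x => by
        rw [Real.norm_eq_abs, abs_of_nonneg (hH_nonneg n x)]; exact hH_le n x)
      (Filter.Eventually.of_forall hH_tendsto)
    have h2 : Tendsto (fun n => ∫ x, H n x ∂P) atTop (nhds (c₂ + m ^ 2)) := by
      simp_rw [hH_integral]
      have hB := tendsto_B hα0 hα1
      apply hB.congr
      intro n
      rw [mul_comm]
    exact tendsto_nhds_unique hdct h2
  have hξsq_int : Integrable (fun x => ξ x ^ 2) P := by
    have h : (fun x => ξ x ^ 2) = fun x => 2 * (ξ x ^ 2 / 2) := by ext x; ring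
    rw [h]
    exact hhalf_int.const_mul 2
  have hEξ2 : ∫ x, ξ x ^ 2 ∂P = 2 * (c₂ + m ^ 2) := by
    have h : (fun x => ξ x ^ 2) = fun x => 2 * (ξ x ^ 2 / 2) := by ext x; ring
    rw [h]
    rw [integral_const_mul, hEξ2half]
  have hmem : MemLp ξ 2 P :=
    (memLp_two_iff_integrable_sq hmeas.aestronglyMeasurable).2 hξsq_int
  rw [variance_eq_sub hmem]
  have hpow : (∫ x, (ξ ^ 2) x ∂P) = ∫ x, ξ x ^ 2 ∂P := by
    apply integral_congr_ae
    filter_upwards with x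
    simp [Pi.pow_apply]
  have hid : (∫ x, ξ x ∂P) = m := hEξ
  calc (∫ x, (ξ ^ 2) x ∂P) - (∫ x, ξ x ∂P) ^ 2 = 2 * (c₂ + m ^ 2) - m ^ 2 := by
        rw [hpow, hEξ2, hid]
    _ = α / ((1 - α) ^ 2 * (2 - α)) := by
        rw [hc₂, hm]
        have h1 : (1:ℝ) - α ≠ 0 := by linarith
        have h2 : (2:ℝ) - α ≠ 0 := by linarith
        field_simp
        ring
end
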